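/- Let (p_n) ∈ SVA₊. If the weighted geometric means of a positive sequence (u_n) converge to a > 0 and (u_n/u_{n-1})^n → 1, then u_n → a. -/

import Mathlib

open Filter

noncomputable def Psum (p : ℕ → ℝ) (n : ℕ) : ℝ := ∑ k ∈ Finset.range (n + 1), p k

noncomputable def wgm (p u : ℕ → ℝ) (n : ℕ) : ℝ :=
  (∏ k ∈ Finset.range (n + 1), u k ^ p k) ^ (1 / Psum p n)

def SVA (p : ℕ → ℝ) : Prop :=
  ∀ l : ℝ, 0 < l → l ≠ 1 →
    0 < liminf (fun n : ℕ => |Psum p ⌊l * (n : ℝ)⌋₊ / Psum p n - 1|) atTop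

set_option maxHeartbeats 2000000

theorem landau_tauberian (p u : ℕ → ℝ) (a : ℝ)
    (hp : ∀ n, 0 ≤ p n) (hp0 : 0 < p 0)
    (hP : Tendsto (Psum p) atTop atTop) (hSVA : SVA p)
    (hu : ∀ n, 0 < u n) (ha : 0 < a)
    (hw : Tendsto (wgm p u) atTop (nhds a))
    (hd : Tendsto (fun n : ℕ => (u n / u (n - 1)) ^ n) atTop (nhds 1)) :
    Tendsto u atTop (nhds a) := by
  set L : ℕ → ℝ := fun n => Real.log (u n) with hLdef
  set S : ℕ → ℝ := fun n => ∑ k ∈ Finset.range (n+1), p k * L k with hSdef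
  set ℓ : ℝ := Real.log a with hℓ
  have hPpos : ∀ n, 0 < Psum p n := by
    intro n
    have h1 : p 0 ≤ Psum p n :=
      Finset.single_le_sum (fun k _ => hp k) (Finset.mem_range.mpr (Nat.succ_pos n))
    linarith
  have hPmono : Monotone (Psum p) := by
    intro m n h
    exact Finset.sum_le_sum_of_subset_of_nonneg
      (Finset.range_subset_range.mpr (by omega)) (fun k _ _ => hp k)
  have hlogw : ∀ n, Real.log (wgm p u n) = S n / Psum p n := by
    intro n
    rw [wgm, Real.log_rpow (Finset.prod_pos (fun k _ => Real.rpow_pos_of_pos (hu k) _)),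
      Real.log_prod (fun k _ => (Real.rpow_pos_of_pos (hu k) _).ne')]
    rw [Finset.sum_congr rfl (fun k _ => Real.log_rpow (hu k) (p k))]
    rw [hSdef]
    field_simp
    rfl
  have hs : Tendsto (fun n => S n / Psum p n) atTop (nhds ℓ) := by
    have h := (Real.continuousAt_log ha.ne').tendsto.comp hw
    simp only [Function.comp_def, hlogw] at h
    exact h
  have hδ : Tendsto (fun n : ℕ => (n : ℝ) * (L n - L (n-1))) atTop (nhds 0) := by
    have h := (Real.continuousAt_log one_ne_zero).tendsto.comp hd
    simp only [Function.comp_def, Real.log_one] at h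
    have heq : ∀ n : ℕ, Real.log ((u n / u (n-1)) ^ n) = (n : ℝ) * (L n - L (n-1)) := by
      intro n
      rw [Real.log_pow, Real.log_div (hu n).ne' (hu (n-1)).ne']
    simpa only [heq] using h
  -- constant from SVA
  obtain ⟨c, hc, hcev⟩ : ∃ c > 0, ∀ᶠ n : ℕ in atTop, c * Psum p n ≤ Psum p (2*n) - Psum p n := by
    have h2 := hSVA 2 (by norm_num) (by norm_num)
    have hbd : IsBoundedUnder (· ≥ ·) atTop
        (fun n : ℕ => |Psum p ⌊(2:ℝ) * (n : ℝ)⌋₊ / Psum p n - 1|) :=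
      isBoundedUnder_of ⟨0, fun n => abs_nonneg _⟩
    set c := liminf (fun n : ℕ => |Psum p ⌊(2:ℝ) * (n : ℝ)⌋₊ / Psum p n - 1|) atTop with hc'
    refine ⟨c/2, by positivity, ?_⟩
    have hev := eventually_lt_of_lt_liminf (show c/2 < c by linarith) hbd
    filter_upwards [hev] with n hn
    have hfl : ⌊(2:ℝ) * (n : ℝ)⌋₊ = 2*n := by
      rw [show (2:ℝ) * (n:ℝ) = ((2*n : ℕ) : ℝ) by push_cast; ring, Nat.floor_natCast]
    rw [hfl] at hn
    have hge : Psum p n ≤ Psum p (2*n) := hPmono (by omega)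
    have h1 : 0 ≤ Psum p (2*n) / Psum p n - 1 := by
      rw [sub_nonneg, le_div_iff₀ (hPpos n)]
      linarith
    rw [abs_of_nonneg h1] at hn
    have h3 : (c/2 + 1) * Psum p n < Psum p (2*n) :=
      (lt_div_iff₀ (hPpos n)).mp (by linarith : c/2 + 1 < Psum p (2*n) / Psum p n)
    nlinarith [hPpos n]
  have hLtend : Tendsto L atTop (nhds ℓ) := by
    rw [Metric.tendsto_atTop]
    intro ε hε
    obtain ⟨N0, hN0⟩ := eventually_atTop.mp hcev
    set ε' := ε / (4 * (1 + 2/c)) with hε'def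
    have hD : 0 < 1 + 2/c := by positivity
    have hε' : 0 < ε' := by positivity
    obtain ⟨N1, hN1⟩ := (Metric.tendsto_atTop.mp hδ) (ε/4) (by linarith)
    obtain ⟨N2, hN2⟩ := (Metric.tendsto_atTop.mp hs) ε' hε'
    refine ⟨N0 + N1 + N2 + 1, fun n hn => ?_⟩
    have hsplit : ∀ f : ℕ → ℝ, ∑ k ∈ Finset.range (n+1), f k
        + ∑ k ∈ Finset.Ico (n+1) (2*n+1), f k = ∑ k ∈ Finset.range (2*n+1), f k := by
      intro f
      rw [Finset.range_eq_Ico, Finset.range_eq_Ico]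
      exact Finset.sum_Ico_consecutive f (m := 0) (n := n+1) (k := 2*n+1) (by omega) (by omega)
    have hstep : ∀ j, n+1 ≤ j → |L j - L (j-1)| ≤ ε/(4*((n:ℝ)+1)) := by
      intro j hj
      have h := hN1 j (by omega)
      rw [Real.dist_eq, sub_zero, abs_mul, Nat.abs_cast] at h
      have hj1 : ((n:ℝ)+1) ≤ (j:ℝ) := by exact_mod_cast hj
      rw [le_div_iff₀ (by positivity)]
      nlinarith [abs_nonneg (L j - L (j-1))]
    have hkey : ∀ k ∈ Finset.Ico (n+1) (2*n+1), |L k - L n| ≤ ε/4 := by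
      intro k hk
      rw [Finset.mem_Ico] at hk
      have htel : L k - L n = ∑ i ∈ Finset.range (k - n), (L (n+(i+1)) - L (n+i)) := by
        rw [Finset.sum_range_sub (fun i => L (n+i))]
        congr 2
        omega
      rw [htel]
      calc |∑ i ∈ Finset.range (k-n), (L (n+(i+1)) - L (n+i))|
          ≤ ∑ i ∈ Finset.range (k-n), |L (n+(i+1)) - L (n+i)| := Finset.abs_sum_le_sum_abs _ _
        _ ≤ ∑ _i ∈ Finset.range (k-n), ε/(4*((n:ℝ)+1)) := by
            refine Finset.sum_le_sum fun i _ => ?_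
            have h := hstep (n+i+1) (by omega)
            simpa [show n+i+1-1 = n+i by omega, show n+(i+1) = n+i+1 by omega] using h
        _ = ((k-n : ℕ) : ℝ) * (ε/(4*((n:ℝ)+1))) := by
            rw [Finset.sum_const, Finset.card_range, nsmul_eq_mul]
        _ ≤ (n:ℝ) * (ε/(4*((n:ℝ)+1))) := by
            refine mul_le_mul_of_nonneg_right ?_ (by positivity)
            exact_mod_cast (by omega : k - n ≤ n)
        _ ≤ ε/4 := by
            rw [mul_div_assoc', div_le_div_iff₀ (by positivity) (by norm_num)]
            nlinarith [Nat.cast_nonneg (α := ℝ) n]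
    set Q := Psum p (2*n) - Psum p n with hQdef
    have hQsplit : Q = ∑ k ∈ Finset.Ico (n+1) (2*n+1), p k := by
      have := hsplit p
      rw [hQdef]
      unfold Psum
      linarith
    have hSsplit : S (2*n) - S n = ∑ k ∈ Finset.Ico (n+1) (2*n+1), p k * L k := by
      have := hsplit (fun k => p k * L k)
      simp only [hSdef]
      linarith
    have hcn := hN0 n (by omega)
    have hQpos : 0 < Q := lt_of_lt_of_le (mul_pos hc (hPpos n)) hcn
    have hnum : |S (2*n) - S n - Q * L n| ≤ Q * (ε/4) := by
      have he : S (2*n) - S n - Q * L n = ∑ k ∈ Finset.Ico (n+1) (2*n+1), p k * (L k - L n) := by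
        rw [hSsplit, hQsplit, Finset.sum_mul, ← Finset.sum_sub_distrib]
        exact Finset.sum_congr rfl fun k _ => by ring
      rw [he, hQsplit, Finset.sum_mul]
      refine (Finset.abs_sum_le_sum_abs _ _).trans (Finset.sum_le_sum fun k hk => ?_)
      rw [abs_mul, abs_of_nonneg (hp k)]
      exact mul_le_mul_of_nonneg_left (hkey k hk) (hp k)
    have hL1 : |L n - (S (2*n) - S n)/Q| ≤ ε/4 := by
      have he : (S (2*n) - S n)/Q - L n = (S (2*n) - S n - Q * L n)/Q := by
        field_simp
      rw [abs_sub_comm, he, abs_div, abs_of_pos hQpos, div_le_iff₀ hQpos]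
      linarith [hnum]
    have hb1 := hN2 n (by omega)
    have hb2 := hN2 (2*n) (by omega)
    rw [Real.dist_eq] at hb1 hb2
    have habs : ∀ m, |S m / Psum p m - ℓ| < ε' → |S m - ℓ * Psum p m| ≤ ε' * Psum p m := by
      intro m hm
      have hPm := hPpos m
      have he : S m - ℓ * Psum p m = (S m / Psum p m - ℓ) * Psum p m := by field_simp
      rw [he, abs_mul, abs_of_pos hPm]
      exact mul_le_mul_of_nonneg_right hm.le hPm.le
    have hB : |(S (2*n) - S n)/Q - ℓ| ≤ ε/4 := by
      have he : (S (2*n) - S n)/Q - ℓ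
          = ((S (2*n) - ℓ * Psum p (2*n)) - (S n - ℓ * Psum p n))/Q := by
        rw [eq_div_iff hQpos.ne', sub_mul, div_mul_cancel₀ _ hQpos.ne', hQdef]
        ring
      rw [he, abs_div, abs_of_pos hQpos, div_le_iff₀ hQpos]
      have h1 := habs n hb1
      have h2 := habs (2*n) hb2
      have h3 : |(S (2*n) - ℓ * Psum p (2*n)) - (S n - ℓ * Psum p n)|
          ≤ ε' * (Psum p (2*n) + Psum p n) := by
        calc |(S (2*n) - ℓ * Psum p (2*n)) - (S n - ℓ * Psum p n)|
            ≤ |S (2*n) - ℓ * Psum p (2*n)| + |S n - ℓ * Psum p n| := abs_sub _ _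
          _ ≤ _ := by linarith
      have hPnQ : Psum p n * c ≤ Q := by nlinarith [hcn]
      have hε4 : c * (ε/4) = ε' * (c + 2) := by
        rw [hε'def]
        field_simp
      have hP2 : Psum p (2*n) = Q + Psum p n := by rw [hQdef]; ring
      have h5 : c * Psum p n ≤ Q := by rw [hQdef]; exact hcn
      have h6 : ε' * (c * Psum p n) ≤ ε' * Q := mul_le_mul_of_nonneg_left h5 hε'.le
      have h7 : c * |S (2*n) - ℓ * Psum p (2*n) - (S n - ℓ * Psum p n)|
          ≤ c * (ε' * (Psum p (2*n) + Psum p n)) := mul_le_mul_of_nonneg_left h3 hc.le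
      have h9 : c * (ε/4) * Q = ε' * (c+2) * Q := by rw [hε4]
      have h8 : c * (ε' * (Psum p (2*n) + Psum p n)) ≤ c * (ε/4 * Q) := by
        rw [hP2]
        nlinarith [h6, h9]
      exact le_of_mul_le_mul_left (h7.trans h8) hc
    rw [Real.dist_eq]
    calc |L n - ℓ| ≤ |L n - (S (2*n) - S n)/Q| + |(S (2*n) - S n)/Q - ℓ| := abs_sub_le _ _ _
      _ ≤ ε/4 + ε/4 := by linarith
      _ < ε := by linarith
  have hfin := (Real.continuous_exp.tendsto ℓ).comp hLtend
  rw [hℓ, Real.exp_log ha] at hfin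
  exact hfin.congr fun n => (Real.exp_log (hu n))
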